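/- arXiv:1407.5219 — 7 statements merged into one kernel-verified Lean document; each statement's English description precedes it below -/
import Mathlib

section
/- Let Q ⊆ ℝ^{n-1} × ℝ be a closed set and π : ℝ^{n-1} × ℝ → ℝ^{n-1} the coordinate projection (x,y) ↦ x. Suppose there is a polynomial f(x,y) monic in y of degree s ≥ 1 such that for every point (x,y) ∈ Q, either f(x,y) = 0 or the entire line {(x, t) : t ∈ ℝ} is contained in Q. Then π(Q) is closed in ℝ^{n-1}. -/
open Polynomial Finset

/-- Cauchy bound for real roots of a monic polynomial. -/
lemma cauchy_root_bound (p : Polynomial ℝ) (hm : p.Monic) (hd : 1 ≤ p.natDegree)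
    (y : ℝ) (hy : p.eval y = 0) :
    |y| ≤ 1 + ∑ i ∈ Finset.range p.natDegree, |p.coeff i| := by
  set s := p.natDegree with hs
  have hsum : (0:ℝ) ≤ ∑ i ∈ Finset.range s, |p.coeff i| :=
    Finset.sum_nonneg fun i _ => abs_nonneg _
  by_cases h1 : |y| ≤ 1
  · linarith
  push_neg at h1
  have hkey : y ^ s = -∑ i ∈ Finset.range s, p.coeff i * y ^ i := by
    have := Polynomial.eval_eq_sum_range (p := p) y
    rw [hy] at this
    rw [Finset.sum_range_succ, hm.coeff_natDegree, one_mul] at this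
    linarith [this]
  have habs : |y| ^ s ≤ (∑ i ∈ Finset.range s, |p.coeff i|) * |y| ^ (s - 1) := by
    calc |y| ^ s = |y ^ s| := (abs_pow y s).symm
      _ = |∑ i ∈ Finset.range s, p.coeff i * y ^ i| := by rw [hkey, abs_neg]
      _ ≤ ∑ i ∈ Finset.range s, |p.coeff i * y ^ i| := Finset.abs_sum_le_sum_abs _ _
      _ ≤ ∑ i ∈ Finset.range s, |p.coeff i| * |y| ^ (s - 1) := by
          apply Finset.sum_le_sum
          intro i hi
          rw [abs_mul, abs_pow]
          apply mul_le_mul_of_nonneg_left _ (abs_nonneg _)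
          exact pow_le_pow_right₀ (le_of_lt h1) (Nat.le_sub_one_of_lt (Finset.mem_range.mp hi))
      _ = (∑ i ∈ Finset.range s, |p.coeff i|) * |y| ^ (s - 1) := by
          rw [Finset.sum_mul]
  have hpow : |y| ^ s = |y| * |y| ^ (s - 1) := by
    conv_lhs => rw [show s = 1 + (s - 1) by omega]
    rw [pow_add, pow_one]
  have hpos : (0:ℝ) < |y| ^ (s - 1) := pow_pos (lt_trans one_pos h1) _
  rw [hpow] at habs
  have : |y| ≤ ∑ i ∈ Finset.range s, |p.coeff i| :=
    le_of_mul_le_mul_right (by linarith [habs]) hpos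
  linarith

/-- If `Q` is closed and every point of `Q` is either a zero of a polynomial that is
monic in the last variable, or lies on a vertical line contained in `Q`, then the
image of `Q` under the projection forgetting the last coordinate is closed. -/
theorem projection_closed_of_monic_polynomial
    (m : ℕ) (Q : Set ((Fin m → ℝ) × ℝ)) (hQ : IsClosed Q)
    (P : Polynomial (MvPolynomial (Fin m) ℝ)) (hmonic : P.Monic) (hdeg : 1 ≤ P.natDegree)
    (hP : ∀ q ∈ Q, Polynomial.eval q.2 (P.map (MvPolynomial.eval q.1)) = 0 ∨
      ∀ t : ℝ, (q.1, t) ∈ Q) :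
    IsClosed (Prod.fst '' Q) := by
  rw [← isSeqClosed_iff_isClosed]
  intro u x hu hux
  -- for each n, find a point of Q over u n with a quantitative bound
  have key : ∀ n : ℕ, ∃ z : ℝ, (u n, z) ∈ Q ∧
      |z| ≤ 1 + ∑ i ∈ Finset.range P.natDegree, |MvPolynomial.eval (u n) (P.coeff i)| := by
    intro n
    obtain ⟨⟨a, y⟩, hmem, ha⟩ := hu n
    simp only at ha
    subst ha
    rcases hP _ hmem with hroot | hline
    · refine ⟨y, hmem, ?_⟩
      have hm' : (P.map (MvPolynomial.eval (u n))).Monic := hmonic.map _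
      have hnd : (P.map (MvPolynomial.eval (u n))).natDegree = P.natDegree :=
        hmonic.natDegree_map _
      have hd' : 1 ≤ (P.map (MvPolynomial.eval (u n))).natDegree := by rwa [hnd]
      have := cauchy_root_bound _ hm' hd' y hroot
      rw [hnd] at this
      simpa only [Polynomial.coeff_map] using this
    · refine ⟨0, hline 0, ?_⟩
      simp only [abs_zero]
      have : (0:ℝ) ≤ ∑ i ∈ Finset.range P.natDegree, |MvPolynomial.eval (u n) (P.coeff i)| :=
        Finset.sum_nonneg fun i _ => abs_nonneg _
      linarith
  choose z hzQ hzb using key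
  -- the bound sequence converges, hence is bounded
  have hcont : Filter.Tendsto
      (fun n => 1 + ∑ i ∈ Finset.range P.natDegree, |MvPolynomial.eval (u n) (P.coeff i)|)
      Filter.atTop
      (nhds (1 + ∑ i ∈ Finset.range P.natDegree, |MvPolynomial.eval x (P.coeff i)|)) := by
    apply Filter.Tendsto.const_add
    apply tendsto_finset_sum
    intro i _
    exact ((continuous_abs.comp (MvPolynomial.continuous_eval _)).continuousAt).tendsto.comp hux
  obtain ⟨C, hC⟩ := hcont.bddAbove_range
  have hzC : ∀ n, z n ∈ Set.Icc (-C) C := by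
    intro n
    have h1 := hzb n
    have h2 : (1 + ∑ i ∈ Finset.range P.natDegree, |MvPolynomial.eval (u n) (P.coeff i)|) ≤ C :=
      hC ⟨n, rfl⟩
    constructor <;> [skip; skip] <;> cases abs_le.mp (h1.trans h2) <;> linarith
  obtain ⟨w, -, φ, hφ, hzw⟩ := (isCompact_Icc (a := -C) (b := C)).tendsto_subseq hzC
  have hQmem : (x, w) ∈ Q := by
    apply hQ.isSeqClosed (fun n => hzQ (φ n))
    exact Filter.Tendsto.prodMk_nhds (hux.comp hφ.tendsto_atTop) hzw
  exact ⟨(x, w), hQmem, rfl⟩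
end

section
/- For all integers n ≥ 2 and p with 0 ≤ p ≤ C(n+1,2) − 2, there exists an integer r with 1 ≤ r ≤ n−1 satisfying both C(n−r+1, 2) ≤ p+1 and C(r+1, 2) ≤ C(n+1, 2) − (p+1); i.e. the Pataki range is nonempty. -/
lemma choose_two_mul (a : ℕ) : 2 * Nat.choose (a + 1) 2 = a * (a + 1) := by
  rw [Nat.choose_two_right]
  simp only [Nat.add_sub_cancel]
  rw [mul_comm (a + 1) a, Nat.mul_div_cancel' (Nat.even_mul_succ_self a).two_dvd]

/-- The Pataki range is nonempty for all `n ≥ 2` and `0 ≤ p ≤ C(n+1,2) - 2`. -/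
theorem pataki_range_nonempty (n p : ℕ) (hn : 2 ≤ n) (hp : p ≤ Nat.choose (n + 1) 2 - 2) :
    ∃ r : ℕ, 1 ≤ r ∧ r ≤ n - 1 ∧
      Nat.choose (n - r + 1) 2 ≤ p + 1 ∧
      Nat.choose (r + 1) 2 ≤ Nat.choose (n + 1) 2 - (p + 1) := by
  have hCn : 2 * Nat.choose (n + 1) 2 = n * (n + 1) := choose_two_mul n
  have hC3 : 3 ≤ Nat.choose (n + 1) 2 := by nlinarith
  have hp' : p + 2 ≤ Nat.choose (n + 1) 2 := by omega
  have hP1 : Nat.choose (1 + 1) 2 ≤ p + 1 := by simp [Nat.choose]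
  obtain ⟨k, hk⟩ : ∃ k, k = Nat.findGreatest (fun k => Nat.choose (k + 1) 2 ≤ p + 1) (n - 1) :=
    ⟨_, rfl⟩
  have hk1 : 1 ≤ k := by
    rw [hk]; exact Nat.le_findGreatest (by omega) hP1
  have hkn : k ≤ n - 1 := by rw [hk]; exact Nat.findGreatest_le _
  have hkspec : Nat.choose (k + 1) 2 ≤ p + 1 := by
    conv_lhs => rw [hk]
    exact Nat.findGreatest_spec (P := fun k => Nat.choose (k + 1) 2 ≤ p + 1) (m := 1) (by omega) hP1
  refine ⟨n - k, by omega, by omega, ?_, ?_⟩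
  · have h : n - (n - k) = k := by omega
    rw [h]; exact hkspec
  · apply Nat.le_sub_of_add_le
    by_cases hcase : k = n - 1
    · have h1 : n - k = 1 := by omega
      rw [h1]
      have h2 : Nat.choose (1 + 1) 2 = 1 := rfl
      omega
    · have hfail : ¬ Nat.choose (k + 1 + 1) 2 ≤ p + 1 :=
        Nat.findGreatest_is_greatest (P := fun k => Nat.choose (k + 1) 2 ≤ p + 1)
          (n := n - 1) (k := k + 1) (by omega) (by omega)
      have hCk2 : 2 * Nat.choose (k + 1 + 1) 2 = (k + 1) * (k + 1 + 1) := choose_two_mul (k + 1)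
      obtain ⟨s, hs1, hs2⟩ : ∃ s, n = k + s + 1 ∧ n - k = s + 1 := ⟨n - k - 1, by omega, by omega⟩
      rw [hs2]
      have hCr : 2 * Nat.choose (s + 1 + 1) 2 = (s + 1) * (s + 1 + 1) := choose_two_mul (s + 1)
      have hfail' : p + 2 ≤ Nat.choose (k + 1 + 1) 2 := by omega
      subst hs1
      nlinarith [Nat.zero_le (k * s)]
end

section
/- Let A(x_1,x_2,y) be the 4×4 symmetric matrix with rows (1, x_1, x_2, y), (x_1, 1, y, x_2), (x_2, y, 1, x_1), (y, x_2, x_1, 1). The spectrahedron Q = {(x_1,x_2,y) ∈ ℝ³ : A(x_1,x_2,y) ⪰ 0} equals the tetrahedron that is the convex hull of the four points (1,1,1), (1,−1,−1), (−1,1,−1), (−1,−1,1). -/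
lemma psd_of_ineqs_aux (v : Fin 3 → ℝ) (ha : 0 ≤ 1 + v 0 + v 1 + v 2)
    (hb : 0 ≤ 1 + v 0 - v 1 - v 2) (hc : 0 ≤ 1 - v 0 + v 1 - v 2)
    (hd : 0 ≤ 1 - v 0 - v 1 + v 2) :
    (Matrix.of ![![1, v 0, v 1, v 2], ![v 0, 1, v 2, v 1],
          ![v 1, v 2, 1, v 0], ![v 2, v 1, v 0, 1]]).PosSemidef := by
  refine Matrix.PosSemidef.of_dotProduct_mulVec_nonneg ?_ ?_
  · ext i j
    fin_cases i <;> fin_cases j <;> simp [Matrix.conjTranspose] <;> rfl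
  · intro x
    simp only [dotProduct, Matrix.mulVec, Fin.sum_univ_four, star, Matrix.of_apply,
      Matrix.cons_val', Matrix.cons_val_zero, Matrix.cons_val_one, Matrix.head_cons,
      Matrix.empty_val', Matrix.cons_val_fin_one, Matrix.head_fin_const, Matrix.cons_val_two,
      Matrix.tail_cons, Matrix.cons_val_three, id]
    nlinarith [mul_nonneg ha (sq_nonneg (x 0 + x 1 + x 2 + x 3)),
      mul_nonneg hb (sq_nonneg (x 0 + x 1 - x 2 - x 3)),
      mul_nonneg hc (sq_nonneg (x 0 - x 1 + x 2 - x 3)),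
      mul_nonneg hd (sq_nonneg (x 0 - x 1 - x 2 + x 3))]

lemma mem_hull_of_ineqs_aux (v : Fin 3 → ℝ) (ha : 0 ≤ 1 + v 0 + v 1 + v 2)
    (hb : 0 ≤ 1 + v 0 - v 1 - v 2) (hc : 0 ≤ 1 - v 0 + v 1 - v 2)
    (hd : 0 ≤ 1 - v 0 - v 1 + v 2) :
    v ∈ convexHull ℝ {![1, 1, 1], ![1, -1, -1], ![(-1 : ℝ), 1, -1], ![(-1 : ℝ), -1, 1]} := by
  set w : Fin 4 → ℝ := ![(1 + v 0 + v 1 + v 2)/4, (1 + v 0 - v 1 - v 2)/4,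
    (1 - v 0 + v 1 - v 2)/4, (1 - v 0 - v 1 + v 2)/4] with hw
  set p : Fin 4 → (Fin 3 → ℝ) := ![![1, 1, 1], ![1, -1, -1], ![(-1 : ℝ), 1, -1],
    ![(-1 : ℝ), -1, 1]] with hp
  have key : Finset.univ.centerMass w p ∈ convexHull ℝ
      {![1, 1, 1], ![1, -1, -1], ![(-1 : ℝ), 1, -1], ![(-1 : ℝ), -1, 1]} := by
    apply Finset.centerMass_mem_convexHull
    · intro i _
      fin_cases i <;> simp [hw] <;> linarith
    · simp [hw, Fin.sum_univ_four]; linarith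
    · intro i _
      fin_cases i <;> simp [hp]
  convert key using 1
  rw [Finset.centerMass, Fin.sum_univ_four, Fin.sum_univ_four]
  funext j
  fin_cases j <;>
    simp [hw, hp, Fin.sum_univ_four] <;> ring

lemma hull_subset_ineqs_aux :
    convexHull ℝ {![1, 1, 1], ![1, -1, -1], ![(-1 : ℝ), 1, -1], ![(-1 : ℝ), -1, 1]} ⊆
      {v : Fin 3 → ℝ | 0 ≤ 1 + v 0 + v 1 + v 2 ∧ 0 ≤ 1 + v 0 - v 1 - v 2 ∧
        0 ≤ 1 - v 0 + v 1 - v 2 ∧ 0 ≤ 1 - v 0 - v 1 + v 2} := by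
  apply convexHull_min
  · rintro v (rfl | rfl | rfl | rfl) <;> norm_num [Matrix.cons_val_two, Matrix.tail_cons, Matrix.head_cons]
  · intro x hx y hy a b ha hb hab
    simp only [Set.mem_setOf_eq] at *
    obtain ⟨h1, h2, h3, h4⟩ := hx
    obtain ⟨g1, g2, g3, g4⟩ := hy
    refine ⟨?_, ?_, ?_, ?_⟩ <;>
      · simp only [Pi.add_apply, Pi.smul_apply, smul_eq_mul]
        nlinarith [mul_nonneg ha h1, mul_nonneg hb g1, mul_nonneg ha h2, mul_nonneg hb g2,
          mul_nonneg ha h3, mul_nonneg hb g3, mul_nonneg ha h4, mul_nonneg hb g4]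

/-- The spectrahedron of the circulant pencil is the tetrahedron with vertices
`(1,1,1), (1,-1,-1), (-1,1,-1), (-1,-1,1)`. -/
theorem circulant_spectrahedron_is_tetrahedron :
    {v : Fin 3 → ℝ |
        (Matrix.of ![![1, v 0, v 1, v 2], ![v 0, 1, v 2, v 1],
          ![v 1, v 2, 1, v 0], ![v 2, v 1, v 0, 1]]).PosSemidef} =
    convexHull ℝ {![1, 1, 1], ![1, -1, -1], ![(-1 : ℝ), 1, -1], ![(-1 : ℝ), -1, 1]} := by
  ext v
  simp only [Set.mem_setOf_eq]
  constructor
  · intro h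
    have ha := h.dotProduct_mulVec_nonneg ![1, 1, 1, 1]
    have hb := h.dotProduct_mulVec_nonneg ![1, 1, -1, -1]
    have hc := h.dotProduct_mulVec_nonneg ![1, -1, 1, -1]
    have hd := h.dotProduct_mulVec_nonneg ![1, -1, -1, 1]
    simp [dotProduct, Matrix.mulVec, Fin.sum_univ_four] at ha hb hc hd
    exact mem_hull_of_ineqs_aux v (by linarith) (by linarith) (by linarith) (by linarith)
  · intro h
    obtain ⟨ha, hb, hc, hd⟩ := hull_subset_ineqs_aux h
    exact psd_of_ineqs_aux v ha hb hc hd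
end

section
/- Let A(x_1,x_2,y) be the 4×4 symmetric matrix with rows (1, x_1, x_2, y), (x_1, 1, y, x_2), (x_2, y, 1, x_1), (y, x_2, x_1, 1). The image of the spectrahedron {(x_1,x_2,y) : A ⪰ 0} under the projection (x_1,x_2,y) ↦ (x_1,x_2) is the square [−1,1] × [−1,1]. -/
/-- The projection of the circulant spectrahedron to the `(x₁,x₂)`-plane is the
square `[-1,1] × [-1,1]`. -/
theorem circulant_spectrahedron_projects_to_square :
    (fun v : Fin 3 → ℝ => ![v 0, v 1]) ''
      {v : Fin 3 → ℝ |
        (Matrix.of ![![1, v 0, v 1, v 2], ![v 0, 1, v 2, v 1],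
          ![v 1, v 2, 1, v 0], ![v 2, v 1, v 0, 1]]).PosSemidef} =
    {w : Fin 2 → ℝ | -1 ≤ w 0 ∧ w 0 ≤ 1 ∧ -1 ≤ w 1 ∧ w 1 ≤ 1} := by
  ext w
  simp only [Set.mem_image, Set.mem_setOf_eq]
  constructor
  · rintro ⟨v, hv, rfl⟩
    have h1 := hv.dotProduct_mulVec_nonneg ![1, 1, 0, 0]
    have h2 := hv.dotProduct_mulVec_nonneg ![1, -1, 0, 0]
    have h3 := hv.dotProduct_mulVec_nonneg ![1, 0, 1, 0]
    have h4 := hv.dotProduct_mulVec_nonneg ![1, 0, -1, 0]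
    simp [Matrix.mulVec, dotProduct, Fin.sum_univ_four] at h1 h2 h3 h4
    refine ⟨by simp; linarith, by simp; linarith, by simp; linarith, by simp; linarith⟩
  · rintro ⟨h1, h2, h3, h4⟩
    refine ⟨![w 0, w 1, w 0 * w 1], Matrix.posSemidef_iff_dotProduct_mulVec.mpr ⟨?_, ?_⟩, ?_⟩
    · ext i j
      fin_cases i <;> fin_cases j <;>
        simp [Matrix.conjTranspose, Matrix.transpose]
    · intro z
      simp only [Matrix.mulVec, dotProduct, Fin.sum_univ_four, Matrix.cons_val_zero,
        Matrix.cons_val_one, Matrix.head_cons, Matrix.of_apply, Matrix.cons_val_two, Matrix.cons_val_three, Matrix.tail_cons, Matrix.head_fin_const, Pi.star_apply, star_trivial,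
        Matrix.cons_val', Matrix.empty_val', Matrix.cons_val_fin_one]
      nlinarith [sq_nonneg (z 0 + z 1 + z 2 + z 3), sq_nonneg (z 0 + z 1 - z 2 - z 3),
        sq_nonneg (z 0 - z 1 + z 2 - z 3), sq_nonneg (z 0 - z 1 - z 2 + z 3),
        mul_nonneg (mul_nonneg (by linarith : (0:ℝ) ≤ 1 + w 0) (by linarith : (0:ℝ) ≤ 1 + w 1)) (sq_nonneg (z 0 + z 1 + z 2 + z 3)),
        mul_nonneg (mul_nonneg (by linarith : (0:ℝ) ≤ 1 + w 0) (by linarith : (0:ℝ) ≤ 1 - w 1)) (sq_nonneg (z 0 + z 1 - z 2 - z 3)),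
        mul_nonneg (mul_nonneg (by linarith : (0:ℝ) ≤ 1 - w 0) (by linarith : (0:ℝ) ≤ 1 + w 1)) (sq_nonneg (z 0 - z 1 + z 2 - z 3)),
        mul_nonneg (mul_nonneg (by linarith : (0:ℝ) ≤ 1 - w 0) (by linarith : (0:ℝ) ≤ 1 - w 1)) (sq_nonneg (z 0 - z 1 - z 2 + z 3))]
    · ext i; fin_cases i <;> simp
end

section
/- Let A(x_1,x_2,y) be the 4×4 symmetric matrix with rows (1, x_1, x_2, y), (x_1, 1, y, x_2), (x_2, y, 1, x_1), (y, x_2, x_1, 1), and let f = det A. Then the resultant of f and ∂f/∂y with respect to y equals, up to a nonzero constant factor, the polynomial (x_1−1)²(x_1+1)²(x_2−1)²(x_2+1)²(x_1−x_2)²(x_1+x_2)². -/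
open MvPolynomial

/-- The Sylvester matrix of two polynomials `f`, `g`, regarded as having
degrees `m` and `n` respectively. -/
def sylvesterMatrix {R : Type*} [CommRing R] (f g : Polynomial R) (m n : ℕ) :
    Matrix (Fin (n + m)) (Fin (n + m)) R :=
  Matrix.of fun i j =>
    if (i : ℕ) < n then
      (if (i : ℕ) ≤ (j : ℕ) ∧ (j : ℕ) ≤ (i : ℕ) + m then f.coeff (m + i - j) else 0)
    else
      (if (i : ℕ) - n ≤ (j : ℕ) ∧ (j : ℕ) ≤ ((i : ℕ) - n) + n then
        g.coeff (n + ((i : ℕ) - n) - j) else 0)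

/-- The resultant of two polynomials with respect to the given degrees. -/
def resultant {R : Type*} [CommRing R] (f g : Polynomial R) (m n : ℕ) : R :=
  (sylvesterMatrix f g m n).det

set_option maxHeartbeats 2000000 in
set_option maxRecDepth 10000 in
private lemma detA_aux {S : Type*} [CommRing S] (a b c : S) :
    (!![1,0,c,b,a,0; 0,1,0,c,b,a; 0,2*c,b,0,0,0;
       4,0,2*c,b,0,0; 0,4,0,2*c,b,0; 0,0,4,0,2*c,b] :
       Matrix (Fin 6) (Fin 6) S).det
    = 4*b^2*c^3 + 9*b^4 - 16*a*c^4 - 56*a*b^2*c + 64*a^2*c^2 := by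
  have k0 : ∀ (u : Fin 5 → S) (x : S) (h : ((3 : Fin 5) : ℕ) < 6),
      Matrix.vecCons x u ⟨((3 : Fin 5) : ℕ), h⟩ = u 2 := fun _ _ _ => rfl
  simp (config := { decide := true }) [Matrix.det_succ_row_zero, Fin.sum_univ_succ,
    Fin.succAbove, Fin.castSucc, Fin.castAdd, Fin.castLE, Matrix.cons_val_succ, k0]
  ring

set_option maxHeartbeats 2000000 in
set_option maxRecDepth 10000 in
private lemma detB_aux {S : Type*} [CommRing S] (a b c : S) :
    (!![0,c,b,a,0,0; 1,0,c,b,a,0; 0,1,0,c,b,a;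
       4,0,2*c,b,0,0; 0,4,0,2*c,b,0; 0,0,4,0,2*c,b] :
       Matrix (Fin 6) (Fin 6) S).det
    = 2*b^2*c^3 + 9*b^4 - 8*a*c^4 - 50*a*b^2*c + 48*a^2*c^2 - 64*a^3 := by
  have k0 : ∀ (u : Fin 5 → S) (x : S) (h : ((3 : Fin 5) : ℕ) < 6),
      Matrix.vecCons x u ⟨((3 : Fin 5) : ℕ), h⟩ = u 2 := fun _ _ _ => rfl
  simp (config := { decide := true }) [Matrix.det_succ_row_zero, Fin.sum_univ_succ,
    Fin.succAbove, Fin.castSucc, Fin.castAdd, Fin.castLE, Matrix.cons_val_succ, k0]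
  ring

set_option maxHeartbeats 2000000 in
set_option maxRecDepth 10000 in
private lemma det7_aux {S : Type*} [CommRing S] (a b c : S) :
    (!![1,0,c,b,a,0,0; 0,1,0,c,b,a,0; 0,0,1,0,c,b,a;
       (4:S),0,2*c,b,0,0,0; 0,4,0,2*c,b,0,0; 0,0,4,0,2*c,b,0; 0,0,0,4,0,2*c,b] :
       Matrix (Fin 7) (Fin 7) S).det
    = 256*a^3 - 128*a^2*c^2 - 27*b^4 + 16*a*c^4 + 144*a*b^2*c - 4*b^2*c^3 := by
  rw [Matrix.det_succ_column_zero]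
  rw [Fin.sum_univ_succ, Fin.sum_univ_succ, Fin.sum_univ_succ, Fin.sum_univ_succ,
    Fin.sum_univ_succ, Fin.sum_univ_succ, Fin.sum_univ_succ, Fin.sum_univ_zero]
  have hA : ((!![1,0,c,b,a,0,0; 0,1,0,c,b,a,0; 0,0,1,0,c,b,a;
       (4:S),0,2*c,b,0,0,0; 0,4,0,2*c,b,0,0; 0,0,4,0,2*c,b,0; 0,0,0,4,0,2*c,b] :
       Matrix (Fin 7) (Fin 7) S).submatrix (Fin.succAbove 0) Fin.succ)
      = !![1,0,c,b,a,0; 0,1,0,c,b,a; 0,2*c,b,0,0,0;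
       4,0,2*c,b,0,0; 0,4,0,2*c,b,0; 0,0,4,0,2*c,b] := by
    ext i j
    fin_cases i <;> fin_cases j <;> rfl
  have hB : ((!![1,0,c,b,a,0,0; 0,1,0,c,b,a,0; 0,0,1,0,c,b,a;
       (4:S),0,2*c,b,0,0,0; 0,4,0,2*c,b,0,0; 0,0,4,0,2*c,b,0; 0,0,0,4,0,2*c,b] :
       Matrix (Fin 7) (Fin 7) S).submatrix
         (Fin.succAbove (Fin.succ (Fin.succ (Fin.succ 0)))) Fin.succ)
      = !![0,c,b,a,0,0; 1,0,c,b,a,0; 0,1,0,c,b,a;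
       4,0,2*c,b,0,0; 0,4,0,2*c,b,0; 0,0,4,0,2*c,b] := by
    ext i j
    fin_cases i <;> fin_cases j <;> rfl
  rw [hA, hB, detA_aux, detB_aux]
  simp [Matrix.vecHead, Matrix.vecTail]
  ring

set_option maxHeartbeats 2000000 in
set_option maxRecDepth 10000 in
/-- The resultant with respect to `y` of `f = det A(x₁,x₂,y)` and `∂f/∂y`, where `A`
is the circulant pencil, equals a nonzero constant times
`(x₁-1)²(x₁+1)²(x₂-1)²(x₂+1)²(x₁-x₂)²(x₁+x₂)²`. -/
theorem resultant_of_circulant_det :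
    ∃ c : ℝ, c ≠ 0 ∧
      (let x₁ : Polynomial (MvPolynomial (Fin 2) ℝ) := Polynomial.C (X 0)
       let x₂ : Polynomial (MvPolynomial (Fin 2) ℝ) := Polynomial.C (X 1)
       let y : Polynomial (MvPolynomial (Fin 2) ℝ) := Polynomial.X
       let f := (Matrix.of ![![1, x₁, x₂, y], ![x₁, 1, y, x₂],
          ![x₂, y, 1, x₁], ![y, x₂, x₁, 1]]).det
       resultant f (Polynomial.derivative f) 4 3) =
      MvPolynomial.C c *
        ((X 0 - 1) ^ 2 * (X 0 + 1) ^ 2 * (X 1 - 1) ^ 2 * (X 1 + 1) ^ 2 *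
          (X 0 - X 1) ^ 2 * (X 0 + X 1) ^ 2) := by
  refine ⟨4096, by norm_num, ?_⟩
  set A0 : MvPolynomial (Fin 2) ℝ :=
    1 - 2*(X 0)^2 - 2*(X 1)^2 + (X 0)^4 - 2*(X 0)^2*(X 1)^2 + (X 1)^4 with hA0
  set A1 : MvPolynomial (Fin 2) ℝ := 8 * X 0 * X 1 with hA1
  set A2 : MvPolynomial (Fin 2) ℝ := -2 - 2*(X 0)^2 - 2*(X 1)^2 with hA2
  have hf : (Matrix.of ![![1, Polynomial.C (X 0 : MvPolynomial (Fin 2) ℝ),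
        Polynomial.C (X 1), Polynomial.X],
        ![Polynomial.C (X 0), 1, Polynomial.X, Polynomial.C (X 1)],
        ![Polynomial.C (X 1), Polynomial.X, 1, Polynomial.C (X 0)],
        ![Polynomial.X, Polynomial.C (X 1), Polynomial.C (X 0), 1]]).det
      = Polynomial.C A0 + Polynomial.C A1 * Polynomial.X + Polynomial.C A2 * Polynomial.X^2
        + Polynomial.X^4 := by
    rw [hA0, hA1, hA2]
    simp [Matrix.det_succ_row_zero, Fin.sum_univ_succ, Fin.succAbove,
      Fin.castSucc, Fin.castAdd, Fin.castLE, Matrix.cons_val_succ]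
    simp only [map_add, map_sub, map_mul, map_pow, map_one, map_ofNat, map_neg]
    ring
  simp only [hf]
  set p : Polynomial (MvPolynomial (Fin 2) ℝ) :=
    Polynomial.C A0 + Polynomial.C A1 * Polynomial.X + Polynomial.C A2 * Polynomial.X^2
      + Polynomial.X^4 with hp
  have hC2 : (Polynomial.C (2 : MvPolynomial (Fin 2) ℝ))
      = (2 : Polynomial (MvPolynomial (Fin 2) ℝ)) := map_ofNat _ 2
  have hC4 : (Polynomial.C (4 : MvPolynomial (Fin 2) ℝ))
      = (4 : Polynomial (MvPolynomial (Fin 2) ℝ)) := map_ofNat _ 4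
  have hg : Polynomial.derivative p
      = Polynomial.C A1 + Polynomial.C (2*A2) * Polynomial.X + Polynomial.C 4 * Polynomial.X^3 := by
    rw [hp]
    simp [Polynomial.derivative_pow]
    simp only [map_mul, hC2, hC4]
    ring
  rw [hg]
  set q : Polynomial (MvPolynomial (Fin 2) ℝ) :=
    Polynomial.C A1 + Polynomial.C (2*A2) * Polynomial.X + Polynomial.C 4 * Polynomial.X^3 with hq
  have hp0 : p.coeff 0 = A0 := by rw [hp]; simp
  have hp1 : p.coeff 1 = A1 := by rw [hp]; simp
  have hp2 : p.coeff 2 = A2 := by rw [hp]; simp [Polynomial.coeff_one]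
  have hp3 : p.coeff 3 = 0 := by rw [hp]; simp [Polynomial.coeff_one]
  have hp4 : p.coeff 4 = 1 := by rw [hp]; simp [Polynomial.coeff_one]
  have hq0 : q.coeff 0 = A1 := by rw [hq]; simp
  have hq1 : q.coeff 1 = 2*A2 := by rw [hq]; simp
  have hq2 : q.coeff 2 = 0 := by rw [hq]; simp
  have hq3 : q.coeff 3 = 4 := by rw [hq]; simp
  have hS : sylvesterMatrix p q 4 3
      = !![1,0,A2,A1,A0,0,0; 0,1,0,A2,A1,A0,0; 0,0,1,0,A2,A1,A0;
          (4 : MvPolynomial (Fin 2) ℝ),0,2*A2,A1,0,0,0; 0,4,0,2*A2,A1,0,0;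
          0,0,4,0,2*A2,A1,0; 0,0,0,4,0,2*A2,A1] := by
    have c5 : ∀ (x0 x1 x2 x3 x4 : MvPolynomial (Fin 2) ℝ) (u : Fin 2 → MvPolynomial (Fin 2) ℝ),
        Matrix.vecCons x0 (Matrix.vecCons x1 (Matrix.vecCons x2 (Matrix.vecCons x3
          (Matrix.vecCons x4 u)))) (5 : Fin 7) = u 0 := fun _ _ _ _ _ _ => rfl
    have c6 : ∀ (x0 x1 x2 x3 x4 : MvPolynomial (Fin 2) ℝ) (u : Fin 2 → MvPolynomial (Fin 2) ℝ),
        Matrix.vecCons x0 (Matrix.vecCons x1 (Matrix.vecCons x2 (Matrix.vecCons x3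
          (Matrix.vecCons x4 u)))) (6 : Fin 7) = u 1 := fun _ _ _ _ _ _ => rfl
    refine Matrix.ext fun i j => ?_
    fin_cases i <;> fin_cases j <;>
      simp (config := { decide := true }) [-Matrix.vecCons_const, sylvesterMatrix, hp0, hp1, hp2, hp3, hp4,
        hq0, hq1, hq2, hq3, Matrix.cons_val_succ, c5, c6,
        show ((3:Fin 7):ℕ) = 3 from rfl, show ((4:Fin 7):ℕ) = 4 from rfl,
        show ((5:Fin 7):ℕ) = 5 from rfl, show ((6:Fin 7):ℕ) = 6 from rfl]
  rw [resultant, hS, det7_aux A0 A1 A2]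
  rw [hA0, hA1, hA2]
  have h4096 : (MvPolynomial.C (4096:ℝ) : MvPolynomial (Fin 2) ℝ)
      = (4096 : MvPolynomial (Fin 2) ℝ) := map_ofNat _ 4096
  rw [h4096]
  ring
end

section
/- Let A be the 3×3 symmetric matrix with rows (y_1, x_1, x_2), (x_1, y_2, −x_1 − (6/5)x_2 − 7/10), (x_2, −x_1 − (6/5)x_2 − 7/10, 2 − y_1 − y_2). If all 2×2 minors of A vanish at a point (x_1, x_2, y_1, y_2) ∈ ℝ⁴, then 100x_1⁴ + 240x_1³x_2 + 344x_1²x_2² + 240x_1x_2³ + 144x_2⁴ + 140x_1³ + 368x_1²x_2 + 380x_1x_2² + 168x_2³ + 49x_1² + 140x_1x_2 + 49x_2² = 0. -/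
/-- If all 2×2 minors of the matrix `A` of Example 3.3 vanish at a point, then the
quartic equation of the projected rank-one locus holds. -/
theorem rank_one_locus_quartic (x₁ x₂ y₁ y₂ : ℝ)
    (A : Matrix (Fin 3) (Fin 3) ℝ)
    (hA : A = Matrix.of ![![y₁, x₁, x₂],
      ![x₁, y₂, -x₁ - (6/5) * x₂ - 7/10],
      ![x₂, -x₁ - (6/5) * x₂ - 7/10, 2 - y₁ - y₂]])
    (hminors : ∀ i j k l : Fin 3, A i j * A k l - A i l * A k j = 0) :
    100*x₁^4 + 240*x₁^3*x₂ + 344*x₁^2*x₂^2 + 240*x₁*x₂^3 + 144*x₂^4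
      + 140*x₁^3 + 368*x₁^2*x₂ + 380*x₁*x₂^2 + 168*x₂^3
      + 49*x₁^2 + 140*x₁*x₂ + 49*x₂^2 = 0 := by
  subst hA
  have e1 := hminors 0 1 1 2
  have e2 := hminors 0 0 1 2
  have e3 := hminors 0 1 2 2
  simp only [Matrix.of_apply, Matrix.cons_val', Matrix.cons_val_zero, Matrix.cons_val_one,
    Matrix.head_cons, Matrix.empty_val', Matrix.cons_val_fin_one, Matrix.head_fin_const,
    Matrix.cons_val_two, Matrix.tail_cons] at e1 e2 e3
  set z : ℝ := -x₁ - (6/5) * x₂ - 7/10 with hz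
  linear_combination (100*x₁*z) * e1 - (100*x₁*x₂) * e2 - (100*x₂*z) * e3
end

section
/- Let H be the 4×4 symmetric matrix with rows (1, x_1, x_2, x_1+x_2), (x_1, 1, y_1, y_2), (x_2, y_1, 1, y_3), (x_1+x_2, y_2, y_3, 1). If H ⪰ 0 for some (y_1,y_2,y_3) ∈ ℝ³, then |x_1| ≤ 1, |x_2| ≤ 1, and |x_1 + x_2| ≤ 1. Conversely, each of the six points (−1,1), (−1,0), (0,−1), (1,−1), (1,0), (0,1) admits a choice of (y_1,y_2,y_3) making H ⪰ 0. -/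
private lemma quad_nonneg {M : Matrix (Fin 4) (Fin 4) ℝ} (hM : M.PosSemidef)
    (v : Fin 4 → ℝ) : 0 ≤ dotProduct v (M.mulVec v) := by
  simpa using hM.dotProduct_mulVec_nonneg v

private lemma psd_of (M : Matrix (Fin 4) (Fin 4) ℝ)
    (hsym : ∀ i j, M i j = M j i)
    (hq : ∀ v : Fin 4 → ℝ, 0 ≤ dotProduct v (M.mulVec v)) : M.PosSemidef := by
  refine Matrix.posSemidef_iff_dotProduct_mulVec.mpr ⟨?_, fun v => by simpa using hq v⟩
  ext i j
  simp [Matrix.conjTranspose_apply, hsym i j]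

/-- Gouveia's representation of the hexagon (Example 4.2): if `H ⪰ 0` for some
`(y₁,y₂,y₃)` then `|x₁| ≤ 1`, `|x₂| ≤ 1` and `|x₁+x₂| ≤ 1`; conversely each of the
six vertices of the hexagon admits a lift making `H ⪰ 0`. -/
theorem gouveia_hexagon :
    (∀ x₁ x₂ y₁ y₂ y₃ : ℝ,
      (Matrix.of ![![1, x₁, x₂, x₁ + x₂], ![x₁, 1, y₁, y₂],
        ![x₂, y₁, 1, y₃], ![x₁ + x₂, y₂, y₃, 1]]).PosSemidef →
      |x₁| ≤ 1 ∧ |x₂| ≤ 1 ∧ |x₁ + x₂| ≤ 1) ∧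
    (∀ x₁ x₂ : ℝ,
      ((x₁, x₂) = (-1, 1) ∨ (x₁, x₂) = (-1, 0) ∨ (x₁, x₂) = (0, -1) ∨
        (x₁, x₂) = (1, -1) ∨ (x₁, x₂) = (1, 0) ∨ (x₁, x₂) = (0, 1)) →
      ∃ y₁ y₂ y₃ : ℝ,
        (Matrix.of ![![1, x₁, x₂, x₁ + x₂], ![x₁, 1, y₁, y₂],
          ![x₂, y₁, 1, y₃], ![x₁ + x₂, y₂, y₃, 1]]).PosSemidef) := by
  constructor
  · intro x₁ x₂ y₁ y₂ y₃ h
    have h1 := quad_nonneg h ![1, -1, 0, 0]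
    have h2 := quad_nonneg h ![1, 1, 0, 0]
    have h3 := quad_nonneg h ![1, 0, -1, 0]
    have h4 := quad_nonneg h ![1, 0, 1, 0]
    have h5 := quad_nonneg h ![1, 0, 0, -1]
    have h6 := quad_nonneg h ![1, 0, 0, 1]
    simp [dotProduct, Matrix.mulVec, Fin.sum_univ_four] at h1 h2 h3 h4 h5 h6
    refine ⟨abs_le.mpr ⟨by linarith, by linarith⟩,
      abs_le.mpr ⟨by linarith, by linarith⟩,
      abs_le.mpr ⟨by linarith, by linarith⟩⟩
  · rintro x₁ x₂ (h | h | h | h | h | h) <;>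
      obtain ⟨h1, h2⟩ := Prod.mk.injEq .. ▸ h <;> subst h1 <;> subst h2
    · exact ⟨-1, 0, 0, psd_of _ (fun i j => by fin_cases i <;> fin_cases j <;> norm_num) (fun v => by
        simp [dotProduct, Matrix.mulVec, Fin.sum_univ_four, Matrix.vecHead, Matrix.vecTail]
        nlinarith [sq_nonneg (v 0 - v 1 + v 2), sq_nonneg (v 3)])⟩
    · exact ⟨0, 1, 0, psd_of _ (fun i j => by fin_cases i <;> fin_cases j <;> norm_num) (fun v => by
        simp [dotProduct, Matrix.mulVec, Fin.sum_univ_four, Matrix.vecHead, Matrix.vecTail]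
        nlinarith [sq_nonneg (v 0 - v 1 - v 3), sq_nonneg (v 2)])⟩
    · exact ⟨0, 0, 1, psd_of _ (fun i j => by fin_cases i <;> fin_cases j <;> norm_num) (fun v => by
        simp [dotProduct, Matrix.mulVec, Fin.sum_univ_four, Matrix.vecHead, Matrix.vecTail]
        nlinarith [sq_nonneg (v 0 - v 2 - v 3), sq_nonneg (v 1)])⟩
    · exact ⟨-1, 0, 0, psd_of _ (fun i j => by fin_cases i <;> fin_cases j <;> norm_num) (fun v => by
        simp [dotProduct, Matrix.mulVec, Fin.sum_univ_four, Matrix.vecHead, Matrix.vecTail]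
        nlinarith [sq_nonneg (v 0 + v 1 - v 2), sq_nonneg (v 3)])⟩
    · exact ⟨0, 1, 0, psd_of _ (fun i j => by fin_cases i <;> fin_cases j <;> norm_num) (fun v => by
        simp [dotProduct, Matrix.mulVec, Fin.sum_univ_four, Matrix.vecHead, Matrix.vecTail]
        nlinarith [sq_nonneg (v 0 + v 1 + v 3), sq_nonneg (v 2)])⟩
    · exact ⟨0, 0, 1, psd_of _ (fun i j => by fin_cases i <;> fin_cases j <;> norm_num) (fun v => by
        simp [dotProduct, Matrix.mulVec, Fin.sum_univ_four, Matrix.vecHead, Matrix.vecTail]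
        nlinarith [sq_nonneg (v 0 + v 2 + v 3), sq_nonneg (v 1)])⟩
end
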